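/- Let d ≥ 1, M ≥ 1, R > 0 and 0 < κ ≤ π/(2R). Let z_1,…,z_M ∈ ℝ^d be pairwise distinct with ‖z_m‖ < R for all m, let a_1,…,a_M, b_1,…,b_M ∈ ℝ satisfy either a_m > 0 for all m, or a_m < 0 for all m, or b_m > 0 for all m. Let θ, x̂_1,…,x̂_J be unit vectors in ℝ^d such that J > (d−1)·M and for every subset T ⊆ {1,…,J} of cardinality d the family (θ − x̂_j)_{j∈T} is linearly independent. Let M' = M + |{m : a_m ≠ 0}| and let N > L ≥ M' be integers. For each j define h_j(n) = Σ_{m=1}^M (n κ a_m + i b_m) · exp(i n κ ⟨θ − x̂_j, z_m⟩) for n ∈ ℕ, and let H^{(j)} ∈ ℂ^{(2N−L)×(L+1)} be the Hankel matrix with entries H^{(j)}_{r,s} = h_j(r+s+1) for 0 ≤ r ≤ 2N−L−1, 0 ≤ s ≤ L. Then for every z ∈ ℝ^d with ‖z‖ < R, the vector φ^{(j)}_z = (exp(i n κ ⟨θ − x̂_j, z⟩))_{n=0}^{2N−L−1} lies in the column space of H^{(j)} for every j ∈ {1,…,J} if and only if z ∈ {z_1,…,z_M}. -/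

import Mathlib

open Matrix Finset

lemma expSum_zero (P : Finset ℂ) : ∀ (T : Finset ℂ) (α β : ℂ → ℂ) (len : ℕ),
    (0:ℂ) ∉ P → T ⊆ P → (∀ x ∈ P, x ∉ T → β x = 0) → P.card + T.card ≤ len →
    (∀ n < len, ∑ x ∈ P, (α x + β x * (n:ℂ)) * x ^ n = 0) →
    ∀ x ∈ P, α x = 0 ∧ β x = 0 := by
  classical
  induction P using Finset.induction with
  | empty => intro T α β len _ hTP _ _ _ x hx; exact absurd hx (by simp)
  | @insert a s ha ih =>
    intro T α β len hP0 hTP hβ hlen hsum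
    have ha0 : a ≠ 0 := fun h => hP0 (by simp [h])
    have hs0 : (0:ℂ) ∉ s := fun h => hP0 (mem_insert_of_mem h)
    have hcard : (insert a s).card = s.card + 1 := by rw [card_insert_of_notMem ha]
    by_cases haT : a ∈ T
    · -- double difference
      set α₂ : ℂ → ℂ := fun x => (x - a)^2 * α x + 2*x*(x-a) * β x with hα₂
      set β₂ : ℂ → ℂ := fun x => (x - a)^2 * β x with hβ₂
      have hTcard : 1 ≤ T.card := Finset.card_pos.mpr ⟨a, haT⟩
      have hlen2 : 2 ≤ len := by
        have := Finset.card_pos.mpr (⟨a, mem_insert_self a s⟩ : (insert a s).Nonempty)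
        omega
      have hstep : ∀ n : ℕ, n + 2 < len → ∑ x ∈ s, (α₂ x + β₂ x * (n:ℂ)) * x ^ n = 0 := by
        intro n hn
        have h0 := hsum n (by omega)
        have h1 := hsum (n+1) (by omega)
        have h2 := hsum (n+2) (by omega)
        have key : ∑ x ∈ insert a s, (α₂ x + β₂ x * (n:ℂ)) * x ^ n
            = (∑ x ∈ insert a s, (α x + β x * ((n:ℕ)+2:ℕ)) * x ^ (n+2))
              - 2*a*(∑ x ∈ insert a s, (α x + β x * ((n:ℕ)+1:ℕ)) * x ^ (n+1))
              + a^2*(∑ x ∈ insert a s, (α x + β x * (n:ℂ)) * x ^ n) := by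
          rw [Finset.mul_sum, Finset.mul_sum, ← Finset.sum_sub_distrib, ← Finset.sum_add_distrib]
          refine Finset.sum_congr rfl fun x _ => ?_
          simp only [hα₂, hβ₂, pow_succ]
          push_cast
          ring
        have hzero : ∑ x ∈ insert a s, (α₂ x + β₂ x * (n:ℂ)) * x ^ n = 0 := by
          rw [key, h0, h1, h2]; ring
        rw [Finset.sum_insert ha] at hzero
        have : (α₂ a + β₂ a * (n:ℂ)) * a ^ n = 0 := by
          simp [hα₂, hβ₂, sub_self]
        rw [this, zero_add] at hzero
        exact hzero
      have ihres := ih (T.erase a) α₂ β₂ (len - 2) hs0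
        (fun x hx => by
          have := hTP (Finset.mem_of_mem_erase hx)
          have hne := Finset.ne_of_mem_erase hx
          rcases Finset.mem_insert.mp this with h | h
          · exact absurd h hne
          · exact h)
        (fun x hx hxT => by
          have : x ∉ T := fun hT => hxT (Finset.mem_erase.mpr ⟨fun h => ha (h ▸ hx), hT⟩)
          simp [hβ₂, hβ x (mem_insert_of_mem hx) this])
        (by rw [Finset.card_erase_of_mem haT]; omega)
        (fun n hn => hstep n (by omega))
      have hres : ∀ x ∈ s, α x = 0 ∧ β x = 0 := by
        intro x hx
        obtain ⟨h1, h2⟩ := ihres x hx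
        have hxa : x - a ≠ 0 := sub_ne_zero.mpr (fun h => ha (h ▸ hx))
        have hβx : β x = 0 := by
          have := mul_eq_zero.mp h2
          rcases this with h | h
          · exact absurd h (pow_ne_zero 2 hxa)
          · exact h
        refine ⟨?_, hβx⟩
        rw [hα₂] at h1
        simp only [hβx, mul_zero, add_zero] at h1
        rcases mul_eq_zero.mp h1 with h | h
        · exact absurd h (pow_ne_zero 2 hxa)
        · exact h
      -- now a
      have h0 := hsum 0 (by omega)
      rw [Finset.sum_insert ha] at h0
      have hs0' : ∑ x ∈ s, (α x + β x * ((0:ℕ):ℂ)) * x ^ 0 = 0 :=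
        Finset.sum_eq_zero fun x hx => by simp [(hres x hx).1, (hres x hx).2]
      rw [hs0'] at h0
      simp at h0
      -- h0 : α a + β a * 0 = 0 → α a = 0
      have hαa : α a = 0 := by simpa using h0
      have h1 := hsum 1 (by omega)
      rw [Finset.sum_insert ha] at h1
      have hs1' : ∑ x ∈ s, (α x + β x * ((1:ℕ):ℂ)) * x ^ 1 = 0 :=
        Finset.sum_eq_zero fun x hx => by simp [(hres x hx).1, (hres x hx).2]
      rw [hs1'] at h1
      simp [hαa] at h1
      have hβa : β a = 0 := by
        rcases h1 with h | h
        · exact h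
        · exact absurd h ha0
      intro x hx
      rcases Finset.mem_insert.mp hx with h | h
      · exact h ▸ ⟨hαa, hβa⟩
      · exact hres x h
    · -- single difference
      have hβa : β a = 0 := hβ a (mem_insert_self a s) haT
      set α₁ : ℂ → ℂ := fun x => (x - a) * α x + x * β x with hα₁
      set β₁ : ℂ → ℂ := fun x => (x - a) * β x with hβ₁
      have hlen1 : 1 ≤ len := by
        have := Finset.card_pos.mpr (⟨a, mem_insert_self a s⟩ : (insert a s).Nonempty)
        omega
      have hstep : ∀ n : ℕ, n + 1 < len → ∑ x ∈ s, (α₁ x + β₁ x * (n:ℂ)) * x ^ n = 0 := by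
        intro n hn
        have h0 := hsum n (by omega)
        have h1 := hsum (n+1) (by omega)
        have key : ∑ x ∈ insert a s, (α₁ x + β₁ x * (n:ℂ)) * x ^ n
            = (∑ x ∈ insert a s, (α x + β x * ((n:ℕ)+1:ℕ)) * x ^ (n+1))
              - a*(∑ x ∈ insert a s, (α x + β x * (n:ℂ)) * x ^ n) := by
          rw [Finset.mul_sum, ← Finset.sum_sub_distrib]
          refine Finset.sum_congr rfl fun x _ => ?_
          simp only [hα₁, hβ₁, pow_succ]
          push_cast
          ring
        have hzero : ∑ x ∈ insert a s, (α₁ x + β₁ x * (n:ℂ)) * x ^ n = 0 := by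
          rw [key, h0, h1]; ring
        rw [Finset.sum_insert ha] at hzero
        have : (α₁ a + β₁ a * (n:ℂ)) * a ^ n = 0 := by
          simp [hα₁, hβ₁, sub_self, hβa]
        rw [this, zero_add] at hzero
        exact hzero
      have hTs : T ⊆ s := fun x hx => by
        rcases Finset.mem_insert.mp (hTP hx) with h | h
        · exact absurd (h ▸ hx) haT
        · exact h
      have ihres := ih T α₁ β₁ (len - 1) hs0 hTs
        (fun x hx hxT => by simp [hβ₁, hβ x (mem_insert_of_mem hx) hxT])
        (by omega)
        (fun n hn => hstep n (by omega))
      have hres : ∀ x ∈ s, α x = 0 ∧ β x = 0 := by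
        intro x hx
        obtain ⟨h1, h2⟩ := ihres x hx
        have hxa : x - a ≠ 0 := sub_ne_zero.mpr (fun h => ha (h ▸ hx))
        have hβx : β x = 0 := by
          rcases mul_eq_zero.mp h2 with h | h
          · exact absurd h hxa
          · exact h
        refine ⟨?_, hβx⟩
        rw [hα₁] at h1
        simp only [hβx, mul_zero, add_zero] at h1
        rcases mul_eq_zero.mp h1 with h | h
        · exact absurd h hxa
        · exact h
      have h0 := hsum 0 (by omega)
      rw [Finset.sum_insert ha] at h0
      have hs0' : ∑ x ∈ s, (α x + β x * ((0:ℕ):ℂ)) * x ^ 0 = 0 :=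
        Finset.sum_eq_zero fun x hx => by simp [(hres x hx).1, (hres x hx).2]
      rw [hs0'] at h0
      have hαa : α a = 0 := by simpa using h0
      intro x hx
      rcases Finset.mem_insert.mp hx with h | h
      · exact h ▸ ⟨hαa, hβa⟩
      · exact hres x h

lemma gram_surjective {ι : Type*} [Fintype ι] [DecidableEq ι] {q : ℕ}
    (K : Matrix ι (Fin q) ℂ)
    (hK : ∀ y : ι → ℂ, Matrix.vecMul y K = 0 → y = 0) (e : ι → ℂ) :
    ∃ c : Fin q → ℂ, K.mulVec c = e := by
  classical
  set G : Matrix ι ι ℂ := K * K.conjTranspose with hG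
  have hGinj : Function.Injective G.mulVecLin := by
    rw [← LinearMap.ker_eq_bot, LinearMap.ker_eq_bot']
    intro y hy
    have hy' : G.mulVec y = 0 := hy
    set v : Fin q → ℂ := Matrix.vecMul (star y) K with hv
    have hsv : Kᴴ.mulVec y = star v := by
      funext s
      simp only [hv, Matrix.mulVec, Matrix.vecMul, dotProduct,
        Matrix.conjTranspose_apply, Pi.star_apply]
      rw [star_sum]
      refine Finset.sum_congr rfl fun i _ => ?_
      simp [mul_comm]
    have hdot : v ⬝ᵥ star v = 0 := by
      rw [← hsv, Matrix.dotProduct_mulVec, hv, Matrix.vecMul_vecMul, ← hG]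
      rw [show Matrix.vecMul (star y) G ⬝ᵥ y = star y ⬝ᵥ G.mulVec y from
        (Matrix.dotProduct_mulVec _ _ _).symm]
      rw [hy']
      simp
    have hv0 : v = 0 := by
      have hre : ∑ s, Complex.normSq (v s) = 0 := by
        have : ((∑ s, Complex.normSq (v s) : ℝ) : ℂ) = 0 := by
          push_cast
          rw [← hdot]
          simp only [dotProduct, Pi.star_apply]
          refine Finset.sum_congr rfl fun s _ => ?_
          rw [← Complex.mul_conj]
          rfl
        exact_mod_cast this
      funext s
      have := (Finset.sum_eq_zero_iff_of_nonneg
        (fun s _ => Complex.normSq_nonneg (v s))).mp hre s (mem_univ s)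
      exact Complex.normSq_eq_zero.mp this
    have : star y = 0 := hK (star y) (by rw [← hv, hv0])
    have := congrArg star this
    simpa using this
  have hGsurj : Function.Surjective G.mulVecLin :=
    LinearMap.injective_iff_surjective.mp hGinj
  obtain ⟨x, hx⟩ := hGsurj e
  refine ⟨Kᴴ.mulVec x, ?_⟩
  rw [Matrix.mulVec_mulVec, ← hG]
  exact hx

lemma bwd_mem {p q : ℕ} (P : Finset ℂ) (α β : ℂ → ℂ) (hP0 : (0:ℂ) ∉ P)
    (hcard : P.card + 1 + (P.filter fun ω => α ω ≠ 0).card ≤ p)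
    (Hm : Matrix (Fin p) (Fin q) ℂ)
    (hHm : ∀ r s, Hm r s = ∑ ω ∈ P,
      (β ω + α ω * (((r:ℕ)+(s:ℕ)+1:ℕ):ℂ)) * ω ^ ((r:ℕ)+(s:ℕ)+1))
    (x : ℂ) (hx : x ≠ 0) (c : Fin q → ℂ)
    (hc : Hm.mulVec c = fun r : Fin p => x ^ (r:ℕ)) : x ∈ P := by
  classical
  by_contra hxP
  set Q := P.filter (fun ω => α ω ≠ 0) with hQdef
  set A : ℂ → ℂ := fun ω => if ω = x then 1 else
    -(∑ s : Fin q, c s * ((β ω + α ω * (((s:ℕ)+1:ℕ):ℂ)) * ω ^ ((s:ℕ)+1))) with hA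
  set B : ℂ → ℂ := fun ω => if ω = x then 0 else
    -(∑ s : Fin q, c s * (α ω * ω ^ ((s:ℕ)+1))) with hB
  have h0 : (0:ℂ) ∉ insert x P := by
    simp only [Finset.mem_insert, not_or]
    exact ⟨fun h => hx h.symm, hP0⟩
  have hrel : ∀ n < p, ∑ ω ∈ insert x P, (A ω + B ω * (n:ℂ)) * ω ^ n = 0 := by
    intro n hn
    rw [Finset.sum_insert hxP]
    have hxterm : (A x + B x * (n:ℂ)) * x ^ n = x ^ n := by simp [hA, hB]
    have hPterm : ∀ ω ∈ P, (A ω + B ω * (n:ℂ)) * ω ^ n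
        = -(∑ s : Fin q, c s * ((β ω + α ω * ((n+(s:ℕ)+1:ℕ):ℂ)) * ω ^ (n+(s:ℕ)+1))) := by
      intro ω hω
      have hωx : ω ≠ x := fun h => hxP (h ▸ hω)
      simp only [hA, hB, if_neg hωx]
      have hterm : ∀ s : Fin q, c s * ((β ω + α ω * ((n+(s:ℕ)+1:ℕ):ℂ)) * ω ^ (n+(s:ℕ)+1))
          = (c s * ((β ω + α ω * (((s:ℕ)+1:ℕ):ℂ)) * ω ^ ((s:ℕ)+1))
             + (c s * (α ω * ω ^ ((s:ℕ)+1))) * (n:ℂ)) * ω ^ n := by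
        intro s
        have hexp : n+(s:ℕ)+1 = ((s:ℕ)+1)+n := by omega
        rw [hexp, pow_add]
        push_cast
        ring
      rw [Finset.sum_congr rfl (fun s _ => hterm s), ← Finset.sum_mul,
        Finset.sum_add_distrib, ← Finset.sum_mul]
      ring
    rw [hxterm, Finset.sum_congr rfl hPterm, Finset.sum_neg_distrib]
    rw [Finset.sum_comm]
    have hlast : ∑ s : Fin q, ∑ ω ∈ P,
        c s * ((β ω + α ω * ((n+(s:ℕ)+1:ℕ):ℂ)) * ω ^ (n+(s:ℕ)+1))
        = (Hm.mulVec c) ⟨n, hn⟩ := by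
      show _ = ∑ s : Fin q, Hm ⟨n, hn⟩ s * c s
      refine Finset.sum_congr rfl fun s _ => ?_
      rw [hHm ⟨n, hn⟩ s]
      have hv : ((⟨n, hn⟩ : Fin p) : ℕ) = n := rfl
      rw [hv, Finset.sum_mul]
      refine Finset.sum_congr rfl fun ω _ => ?_
      ring
    rw [hlast, hc]
    simp
  have hQsub : Q ⊆ insert x P := (Finset.filter_subset _ _).trans (Finset.subset_insert _ _)
  have hB' : ∀ ω ∈ insert x P, ω ∉ Q → B ω = 0 := by
    intro ω hω hωQ
    rcases Finset.mem_insert.mp hω with h | h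
    · simp [hB, h]
    · have hωx : ω ≠ x := fun hh => hxP (hh ▸ h)
      have hα : α ω = 0 := by
        by_contra hne
        exact hωQ (Finset.mem_filter.mpr ⟨h, hne⟩)
      simp [hB, if_neg hωx, hα]
  have hlen : (insert x P).card + Q.card ≤ p := by
    rw [Finset.card_insert_of_notMem hxP]
    omega
  have := (expSum_zero (insert x P) Q A B p h0 hQsub hB' hlen hrel x
    (Finset.mem_insert_self x P)).1
  rw [hA] at this
  simp at this

lemma fwd_mem {p q : ℕ} (P : Finset ℂ) (α β : ℂ → ℂ)
    (hP0 : (0:ℂ) ∉ P) (hdef : ∀ ω ∈ P, α ω ≠ 0 ∨ β ω ≠ 0)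
    (hcard : P.card + (P.filter (fun ω => α ω ≠ 0)).card ≤ q)
    (Hm : Matrix (Fin p) (Fin q) ℂ)
    (hHm : ∀ r s, Hm r s = ∑ ω ∈ P,
      (β ω + α ω * (((r:ℕ)+(s:ℕ)+1:ℕ):ℂ)) * ω ^ ((r:ℕ)+(s:ℕ)+1))
    (ω₀ : ℂ) (hω₀ : ω₀ ∈ P) :
    ∃ c, Hm.mulVec c = fun r : Fin p => ω₀ ^ (r : ℕ) := by
  classical
  set Q : Finset ℂ := P.filter (fun ω => α ω ≠ 0) with hQdef
  set K : Matrix ({x // x ∈ P} ⊕ {x // x ∈ Q}) (Fin q) ℂ :=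
    fun i s => Sum.elim
      (fun ω : {x // x ∈ P} => (β ω.1 + α ω.1 * (((s:ℕ)+1:ℕ):ℂ)) * ω.1 ^ ((s:ℕ)+1))
      (fun ω : {x // x ∈ Q} => α ω.1 * ω.1 ^ ((s:ℕ)+1)) i with hKdef
  have hK : ∀ y, Matrix.vecMul y K = 0 → y = 0 := by
    intro y hy
    set yP : ℂ → ℂ := fun ω => if h : ω ∈ P then y (Sum.inl ⟨ω, h⟩) else 0 with hyP
    set yQ : ℂ → ℂ := fun ω => if h : ω ∈ Q then y (Sum.inr ⟨ω, h⟩) else 0 with hyQ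
    have hyPx : ∀ ω : {x // x ∈ P}, y (Sum.inl ω) = yP ω.1 := by
      intro ω; simp [hyP, ω.2]
    have hyQx : ∀ ω : {x // x ∈ Q}, y (Sum.inr ω) = yQ ω.1 := by
      intro ω; simp [hyQ, ω.2]
    have hrel : ∀ n < q, ∑ ω ∈ P,
        ((yP ω * β ω + yQ ω * α ω + yP ω * α ω) * ω
          + (yP ω * α ω * ω) * (n:ℂ)) * ω ^ n = 0 := by
      intro n hn
      have hcomp := congrFun hy ⟨n, hn⟩
      simp only [Matrix.vecMul, dotProduct, Pi.zero_apply] at hcomp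
      rw [Fintype.sum_sum_type] at hcomp
      have e1 : ∑ ω : {x // x ∈ P}, y (Sum.inl ω) * K (Sum.inl ω) ⟨n, hn⟩
          = ∑ ω ∈ P, yP ω * ((β ω + α ω * (((n:ℕ)+1:ℕ):ℂ)) * ω ^ (n+1)) := by
        rw [← Finset.sum_coe_sort P
          (fun ω => yP ω * ((β ω + α ω * (((n:ℕ)+1:ℕ):ℂ)) * ω ^ (n+1)))]
        refine Finset.sum_congr rfl fun ω _ => ?_
        rw [hyPx ω, hKdef]
        simp
      have e2 : ∑ ω : {x // x ∈ Q}, y (Sum.inr ω) * K (Sum.inr ω) ⟨n, hn⟩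
          = ∑ ω ∈ P, yQ ω * (α ω * ω ^ (n+1)) := by
        have h1 : ∑ ω : {x // x ∈ Q}, y (Sum.inr ω) * K (Sum.inr ω) ⟨n, hn⟩
            = ∑ ω ∈ Q, yQ ω * (α ω * ω ^ (n+1)) := by
          rw [← Finset.sum_coe_sort Q (fun ω => yQ ω * (α ω * ω ^ (n+1)))]
          refine Finset.sum_congr rfl fun ω _ => ?_
          rw [hyQx ω, hKdef]
          simp
        rw [h1]
        exact Finset.sum_subset (Finset.filter_subset _ _) (fun x _ hxQ => by
          simp [hyQ, dif_neg hxQ])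
      have hsplit : ∑ ω ∈ P,
          ((yP ω * β ω + yQ ω * α ω + yP ω * α ω) * ω
            + (yP ω * α ω * ω) * (n:ℂ)) * ω ^ n
          = (∑ ω ∈ P, yP ω * ((β ω + α ω * (((n:ℕ)+1:ℕ):ℂ)) * ω ^ (n+1)))
            + ∑ ω ∈ P, yQ ω * (α ω * ω ^ (n+1)) := by
        rw [← Finset.sum_add_distrib]
        refine Finset.sum_congr rfl fun ω _ => ?_
        rw [pow_succ]
        push_cast
        ring
      rw [hsplit, ← e1, ← e2]
      exact hcomp
    have hmain := expSum_zero P Q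
      (fun ω => (yP ω * β ω + yQ ω * α ω + yP ω * α ω) * ω)
      (fun ω => yP ω * α ω * ω) q hP0 (Finset.filter_subset _ _)
      (fun ω hω hωQ => by
        have hα : α ω = 0 := by
          by_contra hne; exact hωQ (Finset.mem_filter.mpr ⟨hω, hne⟩)
        simp [hα])
      hcard hrel
    have hyP0 : ∀ ω ∈ P, yP ω = 0 ∧ yQ ω * α ω = 0 := by
      intro ω hω
      obtain ⟨h1, h2⟩ := hmain ω hω
      have hω0 : ω ≠ 0 := fun h => hP0 (h ▸ hω)
      have hβ0 : yP ω * α ω = 0 := by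
        rcases mul_eq_zero.mp h2 with h | h
        · exact h
        · exact absurd h hω0
      have hα0 : yP ω * β ω + yQ ω * α ω + yP ω * α ω = 0 := by
        rcases mul_eq_zero.mp h1 with h | h
        · exact h
        · exact absurd h hω0
      rw [hβ0, add_zero] at hα0
      by_cases hQω : ω ∈ Q
      · have hαne : α ω ≠ 0 := (Finset.mem_filter.mp hQω).2
        have hyPω : yP ω = 0 := by
          rcases mul_eq_zero.mp hβ0 with h | h
          · exact h
          · exact absurd h hαne
        rw [hyPω, zero_mul, zero_add] at hα0
        exact ⟨hyPω, hα0⟩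
      · have hα : α ω = 0 := by
          by_contra hne; exact hQω (Finset.mem_filter.mpr ⟨hω, hne⟩)
        have hβne : β ω ≠ 0 := by
          rcases hdef ω hω with h | h
          · exact absurd hα h
          · exact h
        rw [hα, mul_zero, add_zero] at hα0
        have hyPω : yP ω = 0 := by
          rcases mul_eq_zero.mp hα0 with h | h
          · exact h
          · exact absurd h hβne
        exact ⟨hyPω, by rw [hα, mul_zero]⟩
    funext i
    rcases i with ω | ω
    · have := (hyP0 ω.1 ω.2).1
      rw [← hyPx ω] at this
      exact this
    · have hωP : ω.1 ∈ P := Finset.filter_subset _ _ ω.2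
      have hαne : α ω.1 ≠ 0 := (Finset.mem_filter.mp ω.2).2
      have := (hyP0 ω.1 hωP).2
      have hyQω : yQ ω.1 = 0 := by
        rcases mul_eq_zero.mp this with h | h
        · exact h
        · exact absurd h hαne
      rw [← hyQx ω] at hyQω
      exact hyQω
  obtain ⟨c, hc⟩ := gram_surjective K hK
    (Sum.elim (fun ω => if ω.1 = ω₀ then 1 else 0) (fun _ => 0))
  refine ⟨c, ?_⟩
  funext r
  have hKc1 : ∀ x (hx : x ∈ P),
      ∑ s : Fin q, (β x + α x * (((s:ℕ)+1:ℕ):ℂ)) * x ^ ((s:ℕ)+1) * c s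
        = if x = ω₀ then 1 else 0 := by
    intro x hx
    have := congrFun hc (Sum.inl ⟨x, hx⟩)
    simpa [Matrix.mulVec, dotProduct, hKdef] using this
  have hKc2 : ∀ x (hx : x ∈ Q),
      ∑ s : Fin q, α x * x ^ ((s:ℕ)+1) * c s = 0 := by
    intro x hx
    have := congrFun hc (Sum.inr ⟨x, hx⟩)
    simpa [Matrix.mulVec, dotProduct, hKdef] using this
  show ∑ s : Fin q, Hm r s * c s = ω₀ ^ (r:ℕ)
  have hstep1 : ∑ s : Fin q, Hm r s * c s
      = ∑ ω ∈ P, ∑ s : Fin q,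
          (β ω + α ω * (((r:ℕ)+(s:ℕ)+1:ℕ):ℂ)) * ω ^ ((r:ℕ)+(s:ℕ)+1) * c s := by
    refine (Finset.sum_congr rfl fun s _ => ?_).trans Finset.sum_comm
    rw [hHm r s, Finset.sum_mul]
  have hsteps : ∀ ω ∈ P, ∑ s : Fin q,
        (β ω + α ω * (((r:ℕ)+(s:ℕ)+1:ℕ):ℂ)) * ω ^ ((r:ℕ)+(s:ℕ)+1) * c s
      = (∑ s : Fin q, (β ω + α ω * (((s:ℕ)+1:ℕ):ℂ)) * ω ^ ((s:ℕ)+1) * c s) * ω ^ (r:ℕ)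
        + (r:ℂ) * ((∑ s : Fin q, α ω * ω ^ ((s:ℕ)+1) * c s) * ω ^ (r:ℕ)) := by
    intro ω hω
    rw [Finset.sum_mul, Finset.sum_mul, Finset.mul_sum, ← Finset.sum_add_distrib]
    refine Finset.sum_congr rfl fun s _ => ?_
    have hexp : (r:ℕ)+(s:ℕ)+1 = ((s:ℕ)+1)+(r:ℕ) := by omega
    rw [hexp, pow_add]
    push_cast
    ring
  have hfin : ∀ ω ∈ P,
      (∑ s : Fin q, (β ω + α ω * (((s:ℕ)+1:ℕ):ℂ)) * ω ^ ((s:ℕ)+1) * c s) * ω ^ (r:ℕ)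
        + (r:ℂ) * ((∑ s : Fin q, α ω * ω ^ ((s:ℕ)+1) * c s) * ω ^ (r:ℕ))
      = if ω = ω₀ then ω ^ (r:ℕ) else 0 := by
    intro ω hω
    rw [hKc1 ω hω]
    by_cases hQω : ω ∈ Q
    · rw [hKc2 ω hQω]
      by_cases h : ω = ω₀ <;> simp [h]
    · have hα : α ω = 0 := by
        by_contra hne; exact hQω (Finset.mem_filter.mpr ⟨hω, hne⟩)
      have hzero : ∑ s : Fin q, α ω * ω ^ ((s:ℕ)+1) * c s = 0 :=
        Finset.sum_eq_zero fun s _ => by rw [hα, zero_mul, zero_mul]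
      rw [hzero]
      by_cases h : ω = ω₀ <;> simp [h]
  rw [hstep1, Finset.sum_congr rfl hsteps, Finset.sum_congr rfl hfin,
    Finset.sum_ite_eq' P ω₀ (fun ω => ω ^ (r:ℕ)), if_pos hω₀]

lemma music_aux {p q M : ℕ} (κ : ℝ) (hκ0 : 0 < κ) (t a b : Fin M → ℝ)
    (hsign : (∀ m, 0 < a m) ∨ (∀ m, a m < 0) ∨ (∀ m, 0 < b m))
    (S : Finset (Fin M)) (hS : ∀ m, m ∈ S ↔ a m ≠ 0)
    (hq : M + S.card ≤ q) (hp : M + S.card + 1 ≤ p)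
    (Hm : Matrix (Fin p) (Fin q) ℂ)
    (hHm : ∀ (r : Fin p) (s : Fin q), Hm r s =
      ∑ m, ((((r : ℕ) + (s : ℕ) + 1 : ℕ) : ℂ) * (κ : ℂ) * (a m : ℂ)
              + Complex.I * (b m : ℂ)) *
        Complex.exp (Complex.I * (((r : ℕ) + (s : ℕ) + 1 : ℕ) : ℂ) * (κ : ℂ)
          * ((t m : ℝ) : ℂ))) :
    (∀ m₀ : Fin M, ∃ c, Hm.mulVec c
        = fun r : Fin p => Complex.exp (Complex.I * (κ:ℂ) * ((t m₀ : ℝ):ℂ)) ^ (r:ℕ))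
    ∧ (∀ x : ℂ, x ≠ 0 → (∃ c, Hm.mulVec c = fun r : Fin p => x ^ (r:ℕ)) →
        ∃ m, x = Complex.exp (Complex.I * (κ:ℂ) * ((t m : ℝ):ℂ))) := by
  classical
  set w : Fin M → ℂ := fun m => Complex.exp (Complex.I * (κ:ℂ) * ((t m : ℝ):ℂ)) with hw
  set P : Finset ℂ := Finset.image w Finset.univ with hP
  set F : ℂ → Finset (Fin M) := fun ω => Finset.univ.filter (fun m => w m = ω) with hF
  set α : ℂ → ℂ := fun ω => (κ:ℂ) * ((∑ m ∈ F ω, a m : ℝ) : ℂ) with hα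
  set β : ℂ → ℂ := fun ω => Complex.I * ((∑ m ∈ F ω, b m : ℝ) : ℂ) with hβ
  have hκℂ : (κ:ℂ) ≠ 0 := by exact_mod_cast ne_of_gt hκ0
  have hP0 : (0:ℂ) ∉ P := by
    rw [hP]
    intro h
    obtain ⟨m, -, hm⟩ := Finset.mem_image.mp h
    exact Complex.exp_ne_zero _ hm
  have hwpow : ∀ (m : Fin M) (n : ℕ),
      Complex.exp (Complex.I * (n:ℂ) * (κ:ℂ) * ((t m : ℝ):ℂ)) = w m ^ n := by
    intro m n
    rw [hw, ← Complex.exp_nat_mul]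
    congr 1
    ring
  have hHm' : ∀ (r : Fin p) (s : Fin q), Hm r s = ∑ ω ∈ P,
      (β ω + α ω * (((r:ℕ)+(s:ℕ)+1:ℕ):ℂ)) * ω ^ ((r:ℕ)+(s:ℕ)+1) := by
    intro r s
    rw [hHm r s]
    rw [← Finset.sum_fiberwise_of_maps_to
      (fun m _ => Finset.mem_image_of_mem w (Finset.mem_univ m))
      (fun m => ((((r : ℕ) + (s : ℕ) + 1 : ℕ) : ℂ) * (κ : ℂ) * (a m : ℂ)
              + Complex.I * (b m : ℂ)) *
        Complex.exp (Complex.I * (((r : ℕ) + (s : ℕ) + 1 : ℕ) : ℂ) * (κ : ℂ)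
          * ((t m : ℝ) : ℂ)))]
    refine Finset.sum_congr rfl fun ω hω => ?_
    have hterm : ∀ m ∈ F ω,
        ((((r : ℕ) + (s : ℕ) + 1 : ℕ) : ℂ) * (κ : ℂ) * (a m : ℂ)
              + Complex.I * (b m : ℂ)) *
          Complex.exp (Complex.I * (((r : ℕ) + (s : ℕ) + 1 : ℕ) : ℂ) * (κ : ℂ)
            * ((t m : ℝ) : ℂ))
        = ((((r : ℕ) + (s : ℕ) + 1 : ℕ) : ℂ) * (κ : ℂ) * (a m : ℂ)
              + Complex.I * (b m : ℂ)) * ω ^ ((r:ℕ)+(s:ℕ)+1) := by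
      intro m hm
      have hwm : w m = ω := by
        rw [hF] at hm
        exact (Finset.mem_filter.mp hm).2
      rw [hwpow m ((r:ℕ)+(s:ℕ)+1), hwm]
    rw [Finset.sum_congr rfl hterm, ← Finset.sum_mul]
    congr 1
    rw [hα, hβ]
    push_cast
    rw [Finset.mul_sum, Finset.mul_sum, Finset.sum_mul, ← Finset.sum_add_distrib]
    refine Finset.sum_congr rfl fun m _ => ?_
    ring
  have hQsub : P.filter (fun ω => α ω ≠ 0) ⊆ Finset.image w S := by
    intro ω hω
    obtain ⟨hωP, hαω⟩ := Finset.mem_filter.mp hω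
    have hsumne : (∑ m ∈ F ω, a m : ℝ) ≠ 0 := by
      intro h
      apply hαω
      simp only [hα]
      rw [h]
      simp
    obtain ⟨m, hmF, hma⟩ := Finset.exists_ne_zero_of_sum_ne_zero hsumne
    refine Finset.mem_image.mpr ⟨m, (hS m).mpr hma, ?_⟩
    rw [hF] at hmF
    exact (Finset.mem_filter.mp hmF).2
  have hcardPQ : P.card + (P.filter (fun ω => α ω ≠ 0)).card ≤ M + S.card := by
    have h1 : P.card ≤ M := by
      refine (Finset.card_image_le).trans ?_
      simp
    have h2 : (P.filter (fun ω => α ω ≠ 0)).card ≤ S.card :=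
      (Finset.card_le_card hQsub).trans Finset.card_image_le
    omega
  have hdef : ∀ ω ∈ P, α ω ≠ 0 ∨ β ω ≠ 0 := by
    intro ω hω
    obtain ⟨m, _, hwm⟩ := Finset.mem_image.mp hω
    have hmF : m ∈ F ω := by
      rw [hF]
      exact Finset.mem_filter.mpr ⟨Finset.mem_univ m, hwm⟩
    have hne : (F ω).Nonempty := ⟨m, hmF⟩
    rcases hsign with ha | ha | hb
    · left
      have : (0:ℝ) < ∑ m ∈ F ω, a m := Finset.sum_pos (fun i _ => ha i) hne
      rw [hα]
      exact mul_ne_zero hκℂ (by exact_mod_cast ne_of_gt this)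
    · left
      have : ∑ m ∈ F ω, a m < (0:ℝ) := Finset.sum_neg (fun i _ => ha i) hne
      rw [hα]
      exact mul_ne_zero hκℂ (by exact_mod_cast ne_of_lt this)
    · right
      have : (0:ℝ) < ∑ m ∈ F ω, b m := Finset.sum_pos (fun i _ => hb i) hne
      rw [hβ]
      exact mul_ne_zero Complex.I_ne_zero (by exact_mod_cast ne_of_gt this)
  constructor
  · intro m₀
    have hω₀ : w m₀ ∈ P := Finset.mem_image_of_mem w (Finset.mem_univ m₀)
    obtain ⟨c, hc⟩ := fwd_mem P α β hP0 hdef (hcardPQ.trans hq) Hm hHm' (w m₀) hω₀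
    exact ⟨c, hc⟩
  · rintro x hx ⟨c, hc⟩
    have hxP := bwd_mem P α β hP0 (by omega : P.card + 1 + (P.filter fun ω => α ω ≠ 0).card ≤ p)
      Hm hHm' x hx c hc
    obtain ⟨m, _, hwm⟩ := Finset.mem_image.mp hxP
    exact ⟨m, hwm.symm⟩

/-- Identification theorem for the multifrequency MUSIC algorithm under the definiteness
assumption: with `0 < κ ≤ π/(2R)`, pairwise distinct scatterer positions `z_m` in the open
ball of radius `R`, coefficients `a_m, b_m` all of a fixed sign (all `a_m > 0`, or all
`a_m < 0`, or all `b_m > 0`), unit incident direction `θ` and unit receiver directions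
`x̂_j` with `J > (d−1)M` such that every `d` of the vectors `θ − x̂_j` are linearly
independent, `M' = M + |{m : a_m ≠ 0}|`, `N > L ≥ M'`, and Hankel matrices
`H^{(j)}_{r,s} = h_j(r+s+1)` with `h_j(n) = Σ_m (nκa_m + i b_m) exp(inκ⟨θ−x̂_j, z_m⟩)`:
a point `z` with `‖z‖ < R` satisfies `φ^{(j)}_z ∈ 𝓡(H^{(j)})` for all `j` if and only if
`z ∈ {z_1, …, z_M}`. -/
theorem music_identification_definite (d M J N L : ℕ) (hd : 1 ≤ d) (hM : 1 ≤ M)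
    (R κ : ℝ) (hR : 0 < R) (hκ0 : 0 < κ) (hκ : κ ≤ Real.pi / (2 * R))
    (z : Fin M → EuclideanSpace ℝ (Fin d)) (hzinj : Function.Injective z)
    (hzR : ∀ m, ‖z m‖ < R)
    (a b : Fin M → ℝ)
    (hsign : (∀ m, 0 < a m) ∨ (∀ m, a m < 0) ∨ (∀ m, 0 < b m))
    (θ : EuclideanSpace ℝ (Fin d)) (hθ : ‖θ‖ = 1)
    (xhat : Fin J → EuclideanSpace ℝ (Fin d)) (hxhat : ∀ j, ‖xhat j‖ = 1)
    (hJ : (d - 1) * M < J)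
    (hindep : ∀ T : Finset (Fin J), T.card = d →
      LinearIndependent ℝ (fun j : T => θ - xhat j.1))
    (S : Finset (Fin M)) (hS : ∀ m, m ∈ S ↔ a m ≠ 0)
    (hL : M + S.card ≤ L) (hNL : L < N)
    (H : Fin J → Matrix (Fin (2 * N - L)) (Fin (L + 1)) ℂ)
    (hH : ∀ j r s, H j r s =
      ∑ m, ((((r : ℕ) + (s : ℕ) + 1 : ℕ) : ℂ) * (κ : ℂ) * (a m : ℂ)
              + Complex.I * (b m : ℂ)) *
        Complex.exp (Complex.I * (((r : ℕ) + (s : ℕ) + 1 : ℕ) : ℂ) * (κ : ℂ)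
          * ((inner ℝ (θ - xhat j) (z m) : ℝ) : ℂ))) :
    ∀ zz : EuclideanSpace ℝ (Fin d), ‖zz‖ < R →
      ((∀ j, (fun n : Fin (2 * N - L) =>
            Complex.exp (Complex.I * ((n : ℕ) : ℂ) * (κ : ℂ)
              * ((inner ℝ (θ - xhat j) zz : ℝ) : ℂ))) ∈
          LinearMap.range (H j).mulVecLin)
        ↔ ∃ m, zz = z m) := by
  classical
  intro zz hzz
  have hq' : M + S.card ≤ L + 1 := by omega
  have hp' : M + S.card + 1 ≤ 2 * N - L := by omega
  have hauxj : ∀ j : Fin J, _ :=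
    fun j => music_aux κ hκ0 (fun m => (inner ℝ (θ - xhat j) (z m) : ℝ)) a b hsign S hS
      hq' hp' (H j) (hH j)
  constructor
  · intro hmem
    have hort : ∀ j : Fin J, ∃ m : Fin M, (inner ℝ (θ - xhat j) (zz - z m) : ℝ) = 0 := by
      intro j
      set x : ℂ := Complex.exp (Complex.I * (κ:ℂ) * ((inner ℝ (θ - xhat j) zz : ℝ):ℂ)) with hxdef
      have hx : x ≠ 0 := Complex.exp_ne_zero _
      have hmem' : ∃ c, (H j).mulVec c = fun r : Fin (2*N-L) => x ^ (r:ℕ) := by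
        obtain ⟨c, hc⟩ := hmem j
        rw [Matrix.mulVecLin_apply] at hc
        refine ⟨c, ?_⟩
        rw [hc]
        funext r
        rw [hxdef, ← Complex.exp_nat_mul]
        congr 1
        ring
      obtain ⟨m, hm⟩ := (hauxj j).2 x hx hmem'
      refine ⟨m, ?_⟩
      rw [hxdef] at hm
      obtain ⟨k, hk⟩ := Complex.exp_eq_exp_iff_exists_int.mp hm
      have hreal : κ * ((inner ℝ (θ - xhat j) zz : ℝ) - (inner ℝ (θ - xhat j) (z m) : ℝ))
          = 2 * Real.pi * (k:ℝ) := by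
        have hcx : Complex.I * ((κ * ((inner ℝ (θ - xhat j) zz : ℝ)
            - (inner ℝ (θ - xhat j) (z m) : ℝ)) : ℝ) : ℂ)
            = Complex.I * ((2 * Real.pi * (k:ℝ) : ℝ) : ℂ) := by
          push_cast
          linear_combination hk
        have := mul_left_cancel₀ Complex.I_ne_zero hcx
        exact_mod_cast this
      have hdiff : (inner ℝ (θ - xhat j) zz : ℝ) - (inner ℝ (θ - xhat j) (z m) : ℝ)
          = (inner ℝ (θ - xhat j) (zz - z m) : ℝ) := (inner_sub_right _ _ _).symm
      rw [hdiff] at hreal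
      have hbound : |(inner ℝ (θ - xhat j) (zz - z m) : ℝ)| < 2 * (2 * R) := by
        have h1 : |(inner ℝ (θ - xhat j) (zz - z m) : ℝ)| ≤ ‖θ - xhat j‖ * ‖zz - z m‖ :=
          abs_real_inner_le_norm _ _
        have h2 : ‖θ - xhat j‖ ≤ 2 := by
          have := norm_sub_le θ (xhat j)
          rw [hθ, hxhat j] at this
          linarith
        have h3 : ‖zz - z m‖ < 2 * R := by
          have := norm_sub_le zz (z m)
          have := hzR m
          linarith
        nlinarith [norm_nonneg (zz - z m), norm_nonneg (θ - xhat j), hR]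
      have hπ := Real.pi_pos
      have hk0 : k = 0 := by
        by_contra hkne
        have h1 : (1:ℝ) ≤ |(k:ℝ)| := by
          exact_mod_cast Int.one_le_abs (by exact_mod_cast hkne : k ≠ 0)
        have h2 : |κ * (inner ℝ (θ - xhat j) (zz - z m) : ℝ)| < κ * (2 * (2 * R)) := by
          rw [abs_mul, abs_of_pos hκ0]
          exact mul_lt_mul_of_pos_left hbound hκ0
        have h3 : κ * (2 * (2 * R)) ≤ 2 * Real.pi := by
          have h4 : κ * (2 * R) ≤ Real.pi := by
            rw [div_eq_mul_inv] at hκ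
            have h5 : 0 < 2 * R := by linarith
            calc κ * (2 * R) ≤ (Real.pi * (2 * R)⁻¹) * (2 * R) :=
              mul_le_mul_of_nonneg_right hκ (le_of_lt h5)
            _ = Real.pi := by field_simp
          nlinarith
        rw [hreal] at h2
        rw [abs_mul, abs_mul] at h2
        rw [abs_of_pos (by norm_num : (0:ℝ) < 2), abs_of_pos hπ] at h2
        nlinarith
      rw [hk0] at hreal
      simp at hreal
      rcases hreal with h | h
      · exact absurd h (ne_of_gt hκ0)
      · exact h
    choose f hf using hort
    have hfib : ∃ m : Fin M, d ≤ (Finset.univ.filter (fun j => f j = m)).card := by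
      by_contra hcon
      push_neg at hcon
      have hsum := Finset.card_eq_sum_card_fiberwise
        (f := f) (s := Finset.univ) (t := Finset.univ) (fun j _ => Finset.mem_univ (f j))
      have hle : (Finset.univ : Finset (Fin J)).card ≤ ∑ _m : Fin M, (d-1) := by
        rw [hsum]
        exact Finset.sum_le_sum (fun m _ => by have := hcon m; omega)
      rw [Finset.sum_const, Finset.card_univ, Finset.card_univ] at hle
      simp only [Fintype.card_fin, smul_eq_mul] at hle
      have : (d-1) * M < M * (d-1) := lt_of_lt_of_le hJ hle
      rw [mul_comm] at this
      exact lt_irrefl _ this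
    obtain ⟨m, hm⟩ := hfib
    obtain ⟨T, hTsub, hTcard⟩ := Finset.exists_subset_card_eq hm
    have hli := hindep T hTcard
    have hcardT : Fintype.card T = Module.finrank ℝ (EuclideanSpace ℝ (Fin d)) := by
      rw [Fintype.card_coe, hTcard, finrank_euclideanSpace_fin]
    have hne : Nonempty T := by
      rw [← Fintype.card_pos_iff, Fintype.card_coe, hTcard]
      omega
    have hspan : Submodule.span ℝ (Set.range (fun j : T => θ - xhat j.1)) = ⊤ := by
      have hBb := coe_basisOfLinearIndependentOfCardEqFinrank hli hcardT
      rw [← hBb]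
      exact (basisOfLinearIndependentOfCardEqFinrank hli hcardT).span_eq
    have hmem2 : zz - z m ∈ Submodule.span ℝ (Set.range (fun j : T => θ - xhat j.1)) := by
      rw [hspan]
      trivial
    have hinner : (inner ℝ (zz - z m) (zz - z m) : ℝ) = 0 := by
      refine Submodule.span_induction (p := fun v _ => (inner ℝ v (zz - z m) : ℝ) = 0)
        ?_ ?_ ?_ ?_ hmem2
      · rintro v ⟨j, rfl⟩
        have hjT : j.1 ∈ Finset.univ.filter (fun j' => f j' = m) := hTsub j.2
        have hfj : f j.1 = m := (Finset.mem_filter.mp hjT).2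
        have := hf j.1
        rw [hfj] at this
        exact this
      · simp
      · intro u v _ _ hu hv
        rw [inner_add_left, hu, hv]
        ring
      · intro r v _ hv
        rw [real_inner_smul_left, hv]
        ring
    have hz0 : zz - z m = 0 := by rwa [inner_self_eq_zero] at hinner
    exact ⟨m, by rwa [sub_eq_zero] at hz0⟩
  · rintro ⟨m₀, rfl⟩
    intro j
    obtain ⟨c, hc⟩ := (hauxj j).1 m₀
    refine ⟨c, ?_⟩
    rw [Matrix.mulVecLin_apply, hc]
    funext n
    rw [← Complex.exp_nat_mul]
    congr 1
    ring
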